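/- Let B be an m×m real symmetric positive definite matrix, A an m×m real symmetric matrix, and Q an m×k real matrix with Qᵀ B Q = I_k. If (I − Q Qᵀ B) B⁻¹ A = 0 (i.e., the B-orthogonal projector Q Qᵀ B exactly captures the range of B⁻¹A), then A = (B Q) (Qᵀ A Q) (B Q)ᵀ. -/

import Mathlib

open Matrix

/-- exact-capture case of the randomized low-rank factorization:
if `Qᵀ B Q = I_k` and `(I − Q Qᵀ B) B⁻¹ A = 0`, then
`A = (B Q)(Qᵀ A Q)(B Q)ᵀ`. -/
theorem stmt_10 {m k : ℕ} (B A : Matrix (Fin m) (Fin m) ℝ)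
    (Q : Matrix (Fin m) (Fin k) ℝ)
    (hB : B.PosDef) (hA : A.IsSymm) (hQ : Qᵀ * B * Q = 1)
    (hcap : (1 - Q * Qᵀ * B) * (B⁻¹ * A) = 0) :
    A = (B * Q) * (Qᵀ * A * Q) * (B * Q)ᵀ := by
  have hdet : IsUnit B.det := isUnit_iff_ne_zero.mpr hB.det_pos.ne'
  have hBB : B * B⁻¹ = 1 := mul_nonsing_inv B hdet
  have hBs : Bᵀ = B := by
    have := hB.1
    rwa [Matrix.IsHermitian, Matrix.conjTranspose_eq_transpose_of_trivial] at this
  have h1 : B⁻¹ * A = Q * Qᵀ * B * (B⁻¹ * A) := by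
    have := hcap
    rwa [sub_mul, one_mul, sub_eq_zero] at this
  have h1' : B⁻¹ * A = Q * Qᵀ * A := by
    rw [h1, mul_assoc, ← mul_assoc B B⁻¹, hBB, one_mul]
  have h2 : A = B * Q * Qᵀ * A := by
    calc A = B * (B⁻¹ * A) := by rw [← mul_assoc, hBB, one_mul]
    _ = B * (Q * Qᵀ * A) := by rw [h1']
    _ = B * Q * Qᵀ * A := by simp only [Matrix.mul_assoc]
  have h3 : A = A * Q * Qᵀ * B := by
    have := congrArg Matrix.transpose h2
    simpa [Matrix.transpose_mul, hA.eq, hBs, ← Matrix.mul_assoc] using this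
  calc A = B * Q * Qᵀ * A := h2
  _ = B * Q * Qᵀ * (A * Q * Qᵀ * B) := by rw [← h3]
  _ = (B * Q) * (Qᵀ * A * Q) * (B * Q)ᵀ := by
      rw [Matrix.transpose_mul, hBs]
      simp only [Matrix.mul_assoc]
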